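/- Let γ ∈ ℝ \ {0} and b > 0. For every ξ ∈ ℝ^{n-1}, the quantity |−iγξ₁ + |ξ| tanh(|ξ|b)|² equals γ²ξ₁² + |ξ|² tanh²(|ξ|b); it vanishes if and only if ξ = 0; and there exist constants c, C > 0 (depending on γ, b) such that for |ξ| ≤ 1 one has c(γ²ξ₁² + |ξ|⁴) ≤ γ²ξ₁² + |ξ|² tanh²(|ξ|b) ≤ C(γ²ξ₁² + |ξ|⁴), while for |ξ| ≥ 1 one has c|ξ|² ≤ γ²ξ₁² + |ξ|² tanh²(|ξ|b) ≤ C|ξ|². -/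

import Mathlib

lemma mytanh_nonneg {x : ℝ} (hx : 0 ≤ x) : 0 ≤ Real.tanh x := by
  rw [Real.tanh_eq_sinh_div_cosh]
  exact div_nonneg (Real.sinh_nonneg_iff.2 hx) (Real.cosh_pos x).le

lemma mytanh_pos {x : ℝ} (hx : 0 < x) : 0 < Real.tanh x := by
  rw [Real.tanh_eq_sinh_div_cosh]
  exact div_pos (Real.sinh_pos_iff.2 hx) (Real.cosh_pos x)

lemma mytanh_le_one {x : ℝ} : Real.tanh x ≤ 1 := by
  rw [Real.tanh_eq_sinh_div_cosh, div_le_one (Real.cosh_pos x)]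
  nlinarith [Real.cosh_sq x, Real.cosh_pos x, Real.one_le_cosh x, Real.sinh_nonneg_iff (x := x)]

lemma mytanh_mono {x y : ℝ} (h : x ≤ y) : Real.tanh x ≤ Real.tanh y := by
  rw [Real.tanh_eq_sinh_div_cosh, Real.tanh_eq_sinh_div_cosh,
    div_le_div_iff₀ (Real.cosh_pos x) (Real.cosh_pos y)]
  have := Real.sinh_sub x y
  have h2 : Real.sinh (x - y) ≤ 0 := Real.sinh_nonpos_iff.2 (by linarith)
  linarith

lemma mysinh_le {x : ℝ} (hx : 0 ≤ x) : Real.sinh x ≤ x * Real.exp x := by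
  have h1 : 1 - 2 * x ≤ Real.exp (-(2 * x)) := by
    have := Real.add_one_le_exp (-(2 * x)); linarith
  have h2 : Real.sinh x = (Real.exp x - Real.exp (-x)) / 2 := Real.sinh_eq x
  have hex : 0 < Real.exp x := Real.exp_pos x
  have h3 : Real.exp (-(2*x)) * Real.exp x = Real.exp (-x) := by
    rw [← Real.exp_add]; ring_nf
  nlinarith [Real.exp_pos (-x), Real.exp_pos (-(2*x))]

lemma mytanh_le {x : ℝ} (hx : 0 ≤ x) : Real.tanh x ≤ x * Real.exp x := by
  calc Real.tanh x ≤ Real.sinh x := by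
        rw [Real.tanh_eq_sinh_div_cosh, div_le_iff₀ (Real.cosh_pos x)]
        nlinarith [Real.one_le_cosh x, Real.sinh_nonneg_iff.2 hx]
    _ ≤ x * Real.exp x := mysinh_le hx

lemma mytanh_ge {x : ℝ} (hx : 0 ≤ x) : x / Real.cosh x ≤ Real.tanh x := by
  rw [Real.tanh_eq_sinh_div_cosh]
  gcongr
  exact Real.self_le_sinh_iff.2 hx

lemma mycoord_sq_le {d : ℕ} (ξ : EuclideanSpace ℝ (Fin (d+1))) : (ξ 0)^2 ≤ ‖ξ‖^2 := by
  have h := EuclideanSpace.norm_eq ξ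
  have h2 : ‖ξ‖^2 = ∑ i, ‖ξ i‖^2 := by
    rw [h, Real.sq_sqrt (Finset.sum_nonneg fun i _ => sq_nonneg _)]
  rw [h2]
  have := Finset.single_le_sum (f := fun i => ‖ξ i‖^2) (fun i _ => sq_nonneg _)
    (Finset.mem_univ (0 : Fin (d+1)))
  simpa [Real.norm_eq_abs, sq_abs] using this

/-- For `γ ≠ 0`, `b > 0`, and `ξ ∈ ℝ^{d+1}` (with first coordinate `ξ₁ = ξ 0`):
`|−iγξ₁ + |ξ| tanh(|ξ|b)|² = γ²ξ₁² + |ξ|² tanh²(|ξ|b)`; this vanishes iff `ξ = 0`; and there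
are `c, C` (depending on `γ, b`) with the stated low- and high-frequency equivalences. -/
theorem stmt3 (d : ℕ) (γ b : ℝ) (hγ : γ ≠ 0) (hb : 0 < b) :
    (∀ ξ : EuclideanSpace ℝ (Fin (d + 1)),
      ‖-(Complex.I * (γ : ℂ) * ((ξ 0 : ℝ) : ℂ)) +
          ((‖ξ‖ * Real.tanh (‖ξ‖ * b) : ℝ) : ℂ)‖ ^ 2 =
        γ ^ 2 * (ξ 0) ^ 2 + ‖ξ‖ ^ 2 * Real.tanh (‖ξ‖ * b) ^ 2) ∧
    (∀ ξ : EuclideanSpace ℝ (Fin (d + 1)),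
      γ ^ 2 * (ξ 0) ^ 2 + ‖ξ‖ ^ 2 * Real.tanh (‖ξ‖ * b) ^ 2 = 0 ↔ ξ = 0) ∧
    ∃ c C : ℝ, 0 < c ∧ 0 < C ∧
      ∀ ξ : EuclideanSpace ℝ (Fin (d + 1)),
        (‖ξ‖ ≤ 1 →
          c * (γ ^ 2 * (ξ 0) ^ 2 + ‖ξ‖ ^ 4) ≤
              γ ^ 2 * (ξ 0) ^ 2 + ‖ξ‖ ^ 2 * Real.tanh (‖ξ‖ * b) ^ 2 ∧
            γ ^ 2 * (ξ 0) ^ 2 + ‖ξ‖ ^ 2 * Real.tanh (‖ξ‖ * b) ^ 2 ≤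
              C * (γ ^ 2 * (ξ 0) ^ 2 + ‖ξ‖ ^ 4)) ∧
        (1 ≤ ‖ξ‖ →
          c * ‖ξ‖ ^ 2 ≤ γ ^ 2 * (ξ 0) ^ 2 + ‖ξ‖ ^ 2 * Real.tanh (‖ξ‖ * b) ^ 2 ∧
            γ ^ 2 * (ξ 0) ^ 2 + ‖ξ‖ ^ 2 * Real.tanh (‖ξ‖ * b) ^ 2 ≤ C * ‖ξ‖ ^ 2) := by
  refine ⟨?_, ?_, ?_⟩
  · intro ξ
    rw [Complex.sq_norm]
    simp only [Complex.normSq_apply, Complex.add_re, Complex.add_im, Complex.neg_re,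
      Complex.neg_im, Complex.mul_re, Complex.mul_im, Complex.I_re, Complex.I_im,
      Complex.ofReal_re, Complex.ofReal_im]
    ring
  · intro ξ
    constructor
    · intro h
      by_contra hne
      have hn : 0 < ‖ξ‖ := norm_pos_iff.2 hne
      have ht := mytanh_pos (mul_pos hn hb)
      nlinarith [mul_nonneg (sq_nonneg γ) (sq_nonneg (ξ 0)), mul_pos (pow_pos hn 2) (pow_pos ht 2)]
    · intro h; subst h; simp
  · have hcosh : (0:ℝ) < Real.cosh b := Real.cosh_pos b
    have htb : 0 < Real.tanh b := mytanh_pos hb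
    refine ⟨min 1 (min ((b / Real.cosh b)^2) (Real.tanh b ^ 2)),
      1 + γ^2 + (b * Real.exp b)^2, ?_, by positivity, ?_⟩
    · have : 0 < b / Real.cosh b := div_pos hb hcosh
      positivity
    intro ξ
    set N := ‖ξ‖ with hNdef
    have hN : 0 ≤ N := norm_nonneg ξ
    set t := Real.tanh (N * b) with htdef
    have ht0 : 0 ≤ t := mytanh_nonneg (mul_nonneg hN hb.le)
    have hA : 0 ≤ γ^2 * (ξ 0)^2 := mul_nonneg (sq_nonneg γ) (sq_nonneg _)
    have hc1 : min 1 (min ((b / Real.cosh b)^2) (Real.tanh b ^ 2)) ≤ 1 := min_le_left _ _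
    have hc2 : min 1 (min ((b / Real.cosh b)^2) (Real.tanh b ^ 2)) ≤ (b / Real.cosh b)^2 :=
      (min_le_right _ _).trans (min_le_left _ _)
    have hc3 : min 1 (min ((b / Real.cosh b)^2) (Real.tanh b ^ 2)) ≤ Real.tanh b ^ 2 :=
      (min_le_right _ _).trans (min_le_right _ _)
    constructor
    · intro h1
      constructor
      · -- lower bound, low frequency
        have hge : N * b / Real.cosh (N * b) ≤ t := mytanh_ge (mul_nonneg hN hb.le)
        have hcle : Real.cosh (N * b) ≤ Real.cosh b := by
          rw [Real.cosh_le_cosh, abs_of_nonneg (mul_nonneg hN hb.le), abs_of_nonneg hb.le]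
          nlinarith
        have hkey : N * (b / Real.cosh b) ≤ t := by
          have h5 : N * b / Real.cosh b ≤ N * b / Real.cosh (N * b) :=
            div_le_div_of_nonneg_left (mul_nonneg hN hb.le) (Real.cosh_pos _) hcle
          calc N * (b / Real.cosh b) = N * b / Real.cosh b := by ring
            _ ≤ N * b / Real.cosh (N * b) := h5
            _ ≤ t := hge
        have hkpos : 0 ≤ N * (b / Real.cosh b) :=
          mul_nonneg hN (div_nonneg hb.le hcosh.le)
        have hsq : (N * (b / Real.cosh b))^2 ≤ t^2 := pow_le_pow_left₀ hkpos hkey 2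
        nlinarith [mul_le_mul_of_nonneg_left hsq (mul_nonneg hN hN),
          mul_nonneg (sub_nonneg.2 hc1) hA,
          mul_nonneg (sub_nonneg.2 hc2) (pow_nonneg hN 4)]
      · -- upper bound, low frequency
        have hle : t ≤ N * b * Real.exp (N * b) := mytanh_le (mul_nonneg hN hb.le)
        have hexp : Real.exp (N * b) ≤ Real.exp b := by
          apply Real.exp_le_exp.2; nlinarith
        have hkey : t ≤ N * (b * Real.exp b) := by
          calc t ≤ N * b * Real.exp (N * b) := hle
            _ ≤ N * b * Real.exp b := by
                apply mul_le_mul_of_nonneg_left hexp (mul_nonneg hN hb.le)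
            _ = N * (b * Real.exp b) := by ring
        have hsq : t^2 ≤ (N * (b * Real.exp b))^2 := pow_le_pow_left₀ ht0 hkey 2
        nlinarith [mul_le_mul_of_nonneg_left hsq (mul_nonneg hN hN),
          mul_nonneg hA (add_nonneg (sq_nonneg γ) (sq_nonneg (b * Real.exp b))),
          mul_nonneg (mul_nonneg (mul_nonneg hN hN) (mul_nonneg hN hN))
            (add_nonneg (sq_nonneg γ) (sq_nonneg (b * Real.exp b)))]
    · intro h1
      have hmono : Real.tanh b ≤ t := mytanh_mono (by nlinarith)
      constructor
      · -- lower bound, high frequency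
        have hsq : Real.tanh b ^ 2 ≤ t^2 := pow_le_pow_left₀ (mytanh_nonneg hb.le) hmono 2
        have h6 := mul_le_mul_of_nonneg_left hsq (sq_nonneg N)
        have h7 := mul_nonneg (sub_nonneg.2 hc3) (sq_nonneg N)
        nlinarith [hA]
      · -- upper bound, high frequency
        have hcoord := mycoord_sq_le ξ
        have ht1 : t ≤ 1 := mytanh_le_one
        have hsq : t^2 ≤ 1 := pow_le_one₀ ht0 ht1
        have h6 := mul_le_mul_of_nonneg_left hcoord (sq_nonneg γ)
        have h7 := mul_le_mul_of_nonneg_left hsq (sq_nonneg N)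
        have h8 := mul_nonneg (sq_nonneg (b * Real.exp b)) (sq_nonneg N)
        linarith
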